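/- Let p > 0, M ∈ ℝ, and let h : (0,∞) → ℝ be continuously differentiable with lim_{t→0⁺} h(t) = h₀ ∈ ℝ, lim_{t→+∞} h(t) = −∞, and h'(t) ≤ (p h(t) + M)/t for all t > 0. Then for every ρ < min{h₀, −M/p} there exists a unique t_ρ > 0 such that h(t_ρ) = ρ; moreover h'(t) < 0 at every t with h(t) = ρ. -/

import Mathlib

open Filter Set

/-- Helper: negative derivative at a level point gives strict sign behavior of `h - ρ`
on one-sided neighborhoods. -/
lemma slope_neg_right {h : ℝ → ℝ} {d x ρ : ℝ} (hd : HasDerivAt h d x) (hneg : d < 0)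
    (hx : h x = ρ) : {t : ℝ | h t < ρ} ∈ nhdsWithin x (Set.Ioi x) := by
  have hs : Filter.Tendsto (slope h x) (nhdsWithin x {x}ᶜ) (nhds d) :=
    hasDerivAt_iff_tendsto_slope.mp hd
  have hev : ∀ᶠ t in nhdsWithin x {x}ᶜ, slope h x t < 0 := hs.eventually (gt_mem_nhds hneg)
  have hle : nhdsWithin x (Set.Ioi x) ≤ nhdsWithin x {x}ᶜ :=
    nhdsWithin_mono x (fun t ht => ne_of_gt ht)
  have hev2 : ∀ᶠ t in nhdsWithin x (Set.Ioi x), slope h x t < 0 := hev.filter_mono hle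
  filter_upwards [hev2, self_mem_nhdsWithin] with t hts htx
  have htx' : (0:ℝ) < t - x := sub_pos.mpr htx
  have : (h t - h x) / (t - x) < 0 := by simpa [slope_def_field, div_eq_mul_inv] using hts
  have := (div_neg_iff.mp this)
  rcases this with ⟨h1, h2⟩ | ⟨h1, h2⟩
  · linarith
  · linarith [hx]

lemma slope_neg_left {h : ℝ → ℝ} {d x ρ : ℝ} (hd : HasDerivAt h d x) (hneg : d < 0)
    (hx : h x = ρ) : {t : ℝ | ρ < h t} ∈ nhdsWithin x (Set.Iio x) := by
  have hs : Filter.Tendsto (slope h x) (nhdsWithin x {x}ᶜ) (nhds d) :=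
    hasDerivAt_iff_tendsto_slope.mp hd
  have hev : ∀ᶠ t in nhdsWithin x {x}ᶜ, slope h x t < 0 := hs.eventually (gt_mem_nhds hneg)
  have hle : nhdsWithin x (Set.Iio x) ≤ nhdsWithin x {x}ᶜ :=
    nhdsWithin_mono x (fun t ht => ne_of_lt ht)
  have hev2 : ∀ᶠ t in nhdsWithin x (Set.Iio x), slope h x t < 0 := hev.filter_mono hle
  filter_upwards [hev2, self_mem_nhdsWithin] with t hts htx
  have htx' : t - x < 0 := sub_neg.mpr htx
  have : (h t - h x) / (t - x) < 0 := by simpa [slope_def_field, div_eq_mul_inv] using hts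
  have := (div_neg_iff.mp this)
  rcases this with ⟨h1, h2⟩ | ⟨h1, h2⟩
  · linarith [hx]
  · linarith

/-- The one-dimensional core of the construction of the radial retraction: if `h` is `C¹` on
`(0,∞)` with `h(t) → h₀` as `t → 0⁺`, `h(t) → −∞` as `t → +∞`, and
`h'(t) ≤ (p h(t) + M)/t` for all `t > 0`, then every level `ρ < min{h₀, −M/p}` is attained at
a unique `t_ρ > 0`; moreover `h' < 0` at every point where `h = ρ`. -/
theorem unique_level_crossing (p M h₀ : ℝ) (hp : 0 < p) (h h' : ℝ → ℝ)
    (hderiv : ∀ t : ℝ, 0 < t → HasDerivAt h (h' t) t)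
    (hcont : ContinuousOn h' (Set.Ioi 0))
    (hlim0 : Filter.Tendsto h (nhdsWithin 0 (Set.Ioi 0)) (nhds h₀))
    (hlimtop : Filter.Tendsto h Filter.atTop Filter.atBot)
    (hineq : ∀ t : ℝ, 0 < t → h' t ≤ (p * h t + M) / t) :
    ∀ ρ : ℝ, ρ < min h₀ (-M / p) →
      (∃! t : ℝ, 0 < t ∧ h t = ρ) ∧ (∀ t : ℝ, 0 < t → h t = ρ → h' t < 0) := by
  intro ρ hρ
  have hρ0 : ρ < h₀ := lt_of_lt_of_le hρ (min_le_left _ _)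
  have hρM : ρ < -M / p := lt_of_lt_of_le hρ (min_le_right _ _)
  have hpρ : p * ρ + M < 0 := by
    have := (lt_div_iff₀ hp).mp hρM
    nlinarith
  have hneg : ∀ t : ℝ, 0 < t → h t = ρ → h' t < 0 := by
    intro t ht heq
    have h1 := hineq t ht
    rw [heq] at h1
    have h2 : (p * ρ + M) / t < 0 := div_neg_of_neg_of_pos hpρ ht
    linarith
  refine ⟨?_, hneg⟩
  have hc : ∀ t : ℝ, 0 < t → ContinuousAt h t := fun t ht => (hderiv t ht).continuousAt
  have hcOn : ∀ s : Set ℝ, s ⊆ Set.Ioi 0 → ContinuousOn h s :=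
    fun s hs t ht => (hc t (hs ht)).continuousWithinAt
  -- existence
  obtain ⟨a, ⟨hha, ha0⟩⟩ : ∃ a : ℝ, ρ < h a ∧ a ∈ Set.Ioi (0:ℝ) := by
    have h1 : ∀ᶠ t in nhdsWithin 0 (Set.Ioi 0), ρ < h t :=
      hlim0.eventually (lt_mem_nhds hρ0)
    exact (h1.and self_mem_nhdsWithin).exists
  obtain ⟨b, ⟨hhb, hab⟩⟩ : ∃ b : ℝ, h b < ρ ∧ a < b := by
    have h1 : ∀ᶠ t in Filter.atTop, h t < ρ := hlimtop.eventually (eventually_lt_atBot ρ)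
    exact (h1.and (eventually_gt_atTop a)).exists
  have hsub : Set.Icc a b ⊆ Set.Ioi 0 := fun x hx => lt_of_lt_of_le ha0 hx.1
  have hivt : Set.Icc (h b) (h a) ⊆ h '' Set.Icc a b :=
    intermediate_value_Icc' hab.le (hcOn _ hsub)
  obtain ⟨t₀, ht₀mem, ht₀⟩ := hivt ⟨hhb.le, hha.le⟩
  have ht₀pos : 0 < t₀ := hsub ht₀mem
  -- uniqueness: no two distinct crossings
  have key : ∀ s u : ℝ, 0 < s → h s = ρ → h u = ρ → s < u → False := by
    intro s u hs hhs hhu hsu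
    -- to the right of s, h < ρ on some interval
    obtain ⟨u', hu's, hIoo⟩ := (mem_nhdsGT_iff_exists_Ioo_subset).mp
      (slope_neg_right (hderiv s hs) (hneg s hs hhs) hhs)
    have hu's' : s < u' := hu's
    -- every crossing in (s, ∞) lies at distance ≥ u'
    have hcross_ge : ∀ t : ℝ, s < t → h t = ρ → u' ≤ t := by
      intro t hst hht
      by_contra hlt
      push_neg at hlt
      have : t ∈ Set.Ioo s u' := ⟨hst, hlt⟩
      exact absurd hht (ne_of_lt (hIoo this))
    have hu'u : u' ≤ u := hcross_ge u hsu hhu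
    -- the set of crossings in [u', u]
    set C : Set ℝ := {x | x ∈ Set.Icc u' u ∧ h x = ρ} with hC
    have hCsub : Set.Icc u' u ⊆ Set.Ioi 0 := fun x hx => lt_trans hs (lt_of_lt_of_le hu's' hx.1)
    have hCclosed : IsClosed C := by
      have : C = Set.Icc u' u ∩ h ⁻¹' {ρ} := by
        ext x; simp [hC, Set.mem_preimage]
      rw [this]
      exact (hcOn _ hCsub).preimage_isClosed_of_isClosed isClosed_Icc isClosed_singleton
    have hCne : C.Nonempty := ⟨u, ⟨hu'u, le_refl u⟩, hhu⟩
    have hCbdd : BddBelow C := ⟨u', fun x hx => hx.1.1⟩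
    set s' := sInf C with hs'
    have hs'C : s' ∈ C := hCclosed.csInf_mem hCne hCbdd
    have hs'pos : 0 < s' := hCsub hs'C.1
    have hs'ρ : h s' = ρ := hs'C.2
    have hss' : s < s' := lt_of_lt_of_le hu's' hs'C.1.1
    -- pick x₀ ∈ (s, min u' s') with h x₀ < ρ
    have hx0exists : ∃ x₀ : ℝ, s < x₀ ∧ x₀ < u' ∧ x₀ < s' := by
      refine ⟨(s + min u' s') / 2, ?_, ?_, ?_⟩
      · have : s < min u' s' := lt_min hu's' hss'
        linarith
      · have h1 : min u' s' ≤ u' := min_le_left _ _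
        have : s < min u' s' := lt_min hu's' hss'
        linarith
      · have h1 : min u' s' ≤ s' := min_le_right _ _
        have : s < min u' s' := lt_min hu's' hss'
        linarith
    obtain ⟨x₀, hsx₀, hx₀u', hx₀s'⟩ := hx0exists
    have hhx₀ : h x₀ < ρ := hIoo ⟨hsx₀, hx₀u'⟩
    -- to the left of s', h > ρ on some interval (l, s')
    obtain ⟨l, hls', hIoo'⟩ := (mem_nhdsLT_iff_exists_Ioo_subset).mp
      (slope_neg_left (hderiv s' hs'pos) (hneg s' hs'pos hs'ρ) hs'ρ)
    have hls'' : l < s' := hls'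
    -- pick t ∈ (max l x₀, s')
    obtain ⟨t, ht1, ht2⟩ : ∃ t : ℝ, max l x₀ < t ∧ t < s' :=
      exists_between (max_lt hls'' hx₀s')
    have hlt : l < t := lt_of_le_of_lt (le_max_left _ _) ht1
    have hx₀t : x₀ < t := lt_of_le_of_lt (le_max_right _ _) ht1
    have hht : ρ < h t := hIoo' ⟨hlt, ht2⟩
    -- IVT on [x₀, t] gives a crossing c with x₀ ≤ c ≤ t < s'
    have hsub2 : Set.Icc x₀ t ⊆ Set.Ioi 0 := fun x hx => lt_trans hs (lt_of_lt_of_le hsx₀ hx.1)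
    have hivt2 : Set.Icc (h x₀) (h t) ⊆ h '' Set.Icc x₀ t :=
      intermediate_value_Icc hx₀t.le (hcOn _ hsub2)
    obtain ⟨c, hcmem, hhc⟩ := hivt2 ⟨hhx₀.le, hht.le⟩
    have hsc : s < c := lt_of_lt_of_le hsx₀ hcmem.1
    have hcs' : c < s' := lt_of_le_of_lt hcmem.2 ht2
    have hu'c : u' ≤ c := hcross_ge c hsc hhc
    have hcu : c ≤ u := le_trans hcs'.le hs'C.1.2
    have : s' ≤ c := csInf_le hCbdd ⟨⟨hu'c, hcu⟩, hhc⟩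
    linarith
  refine ⟨t₀, ⟨ht₀pos, ht₀⟩, ?_⟩
  rintro y ⟨hy0, hyρ⟩
  rcases lt_trichotomy y t₀ with hlt | heq | hgt
  · exact absurd (key y t₀ hy0 hyρ ht₀ hlt) (fun f => f)
  · exact heq
  · exact absurd (key t₀ y ht₀pos ht₀ hyρ hgt) (fun f => f)
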